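/- For G = ES_1(p,n), the image of the natural homomorphism Φ₁ : Aut(G) → Aut(G/Z(G)) = GL_{2n}(𝔽_p) is exactly the symplectic similitude group Sp^{scalar}(2n,𝔽_p) = {M ∈ GL_{2n}(𝔽_p) : MᵗΔM = lΔ for some l ∈ 𝔽_p^*}. -/

import Mathlib

open Matrix

/-- The Heisenberg group `ES₁(p,n)`: carrier `𝔽_p^n × 𝔽_p^n × 𝔽_p`. -/
@[ext]
structure ES1 (p n : ℕ) : Type where
  u : Fin n → ZMod p
  w : Fin n → ZMod p
  z : ZMod p

namespace ES1

variable {p n : ℕ}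

instance : Mul (ES1 p n) :=
  ⟨fun x y => ⟨x.u + y.u, x.w + y.w, x.z + y.z + x.u ⬝ᵥ y.w⟩⟩

@[simp] theorem mul_u (x y : ES1 p n) : (x * y).u = x.u + y.u := rfl
@[simp] theorem mul_w (x y : ES1 p n) : (x * y).w = x.w + y.w := rfl
@[simp] theorem mul_z (x y : ES1 p n) : (x * y).z = x.z + y.z + x.u ⬝ᵥ y.w := rfl

instance : One (ES1 p n) := ⟨⟨0, 0, 0⟩⟩

@[simp] theorem one_u : (1 : ES1 p n).u = 0 := rfl
@[simp] theorem one_w : (1 : ES1 p n).w = 0 := rfl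
@[simp] theorem one_z : (1 : ES1 p n).z = 0 := rfl

instance : Inv (ES1 p n) :=
  ⟨fun x => ⟨-x.u, -x.w, -x.z + x.u ⬝ᵥ x.w⟩⟩

@[simp] theorem inv_u (x : ES1 p n) : (x⁻¹).u = -x.u := rfl
@[simp] theorem inv_w (x : ES1 p n) : (x⁻¹).w = -x.w := rfl
@[simp] theorem inv_z (x : ES1 p n) : (x⁻¹).z = -x.z + x.u ⬝ᵥ x.w := rfl

instance : Group (ES1 p n) :=
  Group.ofLeftAxioms
    (fun a b c => by
      ext <;> simp [add_dotProduct, dotProduct_add] <;> ring)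
    (fun a => by ext <;> simp)
    (fun a => by ext <;> simp [neg_dotProduct] <;> ring)

end ES1

/-- The standard symplectic matrix `Δ = [[0, Iₙ], [-Iₙ, 0]]`. -/
def Delta (p n : ℕ) : Matrix (Fin n ⊕ Fin n) (Fin n ⊕ Fin n) (ZMod p) :=
  Matrix.fromBlocks 0 1 (-1) 0

section AuxES1
variable {p n : ℕ}

private lemma pairA (x y : Fin n ⊕ Fin n → ZMod p) :
    x ⬝ᵥ (Delta p n *ᵥ y) =
      (x ∘ Sum.inl) ⬝ᵥ (y ∘ Sum.inr) - (x ∘ Sum.inr) ⬝ᵥ (y ∘ Sum.inl) := by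
  have hx := (Sum.elim_comp_inl_inr x).symm
  have hy := (Sum.elim_comp_inl_inr y).symm
  rw [hx, hy, Delta, Matrix.fromBlocks_mulVec]
  simp only [Matrix.zero_mulVec, Matrix.one_mulVec, Matrix.neg_mulVec, zero_add, add_zero,
    sumElim_dotProduct_sumElim, dotProduct_neg, Sum.elim_comp_inl,
    Sum.elim_comp_inr]
  ring

private lemma pairB (M : Matrix (Fin n ⊕ Fin n) (Fin n ⊕ Fin n) (ZMod p))
    (v v' : Fin n ⊕ Fin n → ZMod p) :
    (M *ᵥ v) ⬝ᵥ (Delta p n *ᵥ (M *ᵥ v')) = v ⬝ᵥ ((Mᵀ * Delta p n * M) *ᵥ v') := by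
  simp only [Matrix.dotProduct_mulVec, Matrix.mulVec_mulVec, ← Matrix.vecMul_vecMul,
    Matrix.vecMul_transpose]

/-- The candidate automorphism attached to a matrix `M` and scalar `l`. -/
private def phi (M : Matrix (Fin n ⊕ Fin n) (Fin n ⊕ Fin n) (ZMod p)) (l : ZMod p)
    (g : ES1 p n) : ES1 p n :=
  ⟨(M *ᵥ Sum.elim g.u g.w) ∘ Sum.inl, (M *ᵥ Sum.elim g.u g.w) ∘ Sum.inr,
    l * g.z + (((M *ᵥ Sum.elim g.u g.w) ∘ Sum.inl) ⬝ᵥ ((M *ᵥ Sum.elim g.u g.w) ∘ Sum.inr)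
      - l * (g.u ⬝ᵥ g.w)) * (2 : ZMod p)⁻¹⟩

private lemma phi_phi [Fact p.Prime] {M N : Matrix (Fin n ⊕ Fin n) (Fin n ⊕ Fin n) (ZMod p)} {l : ZMod p}
    (hNM : ∀ x, N *ᵥ (M *ᵥ x) = x) (hl : l ≠ 0) (h2 : (2 : ZMod p) ≠ 0) (g : ES1 p n) :
    phi N l⁻¹ (phi M l g) = g := by
  have hv : Sum.elim ((phi M l g).u) ((phi M l g).w) = M *ᵥ Sum.elim g.u g.w :=
    Sum.elim_comp_inl_inr (M *ᵥ Sum.elim g.u g.w)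
  ext
  · show (N *ᵥ Sum.elim ((phi M l g).u) ((phi M l g).w)) (Sum.inl _) = _
    rw [hv, hNM]; rfl
  · show (N *ᵥ Sum.elim ((phi M l g).u) ((phi M l g).w)) (Sum.inr _) = _
    rw [hv, hNM]; rfl
  · show l⁻¹ * (phi M l g).z +
        (((N *ᵥ Sum.elim ((phi M l g).u) ((phi M l g).w)) ∘ Sum.inl) ⬝ᵥ
          ((N *ᵥ Sum.elim ((phi M l g).u) ((phi M l g).w)) ∘ Sum.inr)
          - l⁻¹ * ((phi M l g).u ⬝ᵥ (phi M l g).w)) * (2 : ZMod p)⁻¹ = g.z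
    rw [hv, hNM]
    show l⁻¹ * (l * g.z + (((M *ᵥ Sum.elim g.u g.w) ∘ Sum.inl) ⬝ᵥ
        ((M *ᵥ Sum.elim g.u g.w) ∘ Sum.inr) - l * (g.u ⬝ᵥ g.w)) * (2 : ZMod p)⁻¹) +
        ((g.u ⬝ᵥ g.w) - l⁻¹ * (((M *ᵥ Sum.elim g.u g.w) ∘ Sum.inl) ⬝ᵥ
          ((M *ᵥ Sum.elim g.u g.w) ∘ Sum.inr))) * (2 : ZMod p)⁻¹ = g.z
    have hli : l⁻¹ * l = 1 := ZMod.inv_mul_of_unit l (isUnit_iff_ne_zero.mpr hl)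
    linear_combination (g.z - (g.u ⬝ᵥ g.w) * (2 : ZMod p)⁻¹) * hli

private lemma sympl {M : Matrix (Fin n ⊕ Fin n) (Fin n ⊕ Fin n) (ZMod p)} {l : ZMod p}
    (hM : Mᵀ * Delta p n * M = l • Delta p n) (v v' : Fin n ⊕ Fin n → ZMod p) :
    ((M *ᵥ v) ∘ Sum.inl) ⬝ᵥ ((M *ᵥ v') ∘ Sum.inr)
      - ((M *ᵥ v) ∘ Sum.inr) ⬝ᵥ ((M *ᵥ v') ∘ Sum.inl)
      = l * ((v ∘ Sum.inl) ⬝ᵥ (v' ∘ Sum.inr) - (v ∘ Sum.inr) ⬝ᵥ (v' ∘ Sum.inl)) := by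
  rw [← pairA, ← pairA, pairB, hM, Matrix.smul_mulVec, dotProduct_smul,
    smul_eq_mul]

private lemma phi_mul [Fact p.Prime] {M : Matrix (Fin n ⊕ Fin n) (Fin n ⊕ Fin n) (ZMod p)}
    {l : ZMod p} (hM : Mᵀ * Delta p n * M = l • Delta p n) (h2 : (2 : ZMod p) ≠ 0)
    (g₁ g₂ : ES1 p n) : phi M l (g₁ * g₂) = phi M l g₁ * phi M l g₂ := by
  have hadd : Sum.elim (g₁ * g₂).u (g₁ * g₂).w
      = Sum.elim g₁.u g₁.w + Sum.elim g₂.u g₂.w := by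
    funext x; cases x <;> rfl
  have hMv : M *ᵥ Sum.elim (g₁ * g₂).u (g₁ * g₂).w
      = M *ᵥ Sum.elim g₁.u g₁.w + M *ᵥ Sum.elim g₂.u g₂.w := by
    rw [hadd, Matrix.mulVec_add]
  have ec : ∀ (a b : Fin n ⊕ Fin n → ZMod p) (f : Fin n → Fin n ⊕ Fin n),
      (a + b) ∘ f = a ∘ f + b ∘ f := fun _ _ _ => rfl
  have hs := sympl hM (Sum.elim g₁.u g₁.w) (Sum.elim g₂.u g₂.w)
  simp only [Sum.elim_comp_inl, Sum.elim_comp_inr] at hs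
  have h2' : (2 : ZMod p)⁻¹ * 2 = 1 := ZMod.inv_mul_of_unit 2 (isUnit_iff_ne_zero.mpr h2)
  refine ES1.ext ?_ ?_ ?_
  · show (M *ᵥ Sum.elim (g₁ * g₂).u (g₁ * g₂).w) ∘ Sum.inl = _
    rw [hMv]; rfl
  · show (M *ᵥ Sum.elim (g₁ * g₂).u (g₁ * g₂).w) ∘ Sum.inr = _
    rw [hMv]; rfl
  · show l * (g₁ * g₂).z +
        (((M *ᵥ Sum.elim (g₁ * g₂).u (g₁ * g₂).w) ∘ Sum.inl) ⬝ᵥ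
          ((M *ᵥ Sum.elim (g₁ * g₂).u (g₁ * g₂).w) ∘ Sum.inr)
          - l * ((g₁ * g₂).u ⬝ᵥ (g₁ * g₂).w)) * (2 : ZMod p)⁻¹
        = (phi M l g₁).z + (phi M l g₂).z + (phi M l g₁).u ⬝ᵥ (phi M l g₂).w
    rw [hMv]
    show l * (g₁.z + g₂.z + g₁.u ⬝ᵥ g₂.w) +
        (((M *ᵥ Sum.elim g₁.u g₁.w + M *ᵥ Sum.elim g₂.u g₂.w) ∘ Sum.inl) ⬝ᵥ
          ((M *ᵥ Sum.elim g₁.u g₁.w + M *ᵥ Sum.elim g₂.u g₂.w) ∘ Sum.inr)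
          - l * ((g₁.u + g₂.u) ⬝ᵥ (g₁.w + g₂.w))) * (2 : ZMod p)⁻¹
        = (phi M l g₁).z + (phi M l g₂).z + (phi M l g₁).u ⬝ᵥ (phi M l g₂).w
    rw [ec, ec]
    show _ = (l * g₁.z + (((M *ᵥ Sum.elim g₁.u g₁.w) ∘ Sum.inl) ⬝ᵥ
          ((M *ᵥ Sum.elim g₁.u g₁.w) ∘ Sum.inr) - l * (g₁.u ⬝ᵥ g₁.w)) * (2 : ZMod p)⁻¹) +
        (l * g₂.z + (((M *ᵥ Sum.elim g₂.u g₂.w) ∘ Sum.inl) ⬝ᵥ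
          ((M *ᵥ Sum.elim g₂.u g₂.w) ∘ Sum.inr) - l * (g₂.u ⬝ᵥ g₂.w)) * (2 : ZMod p)⁻¹) +
        ((M *ᵥ Sum.elim g₁.u g₁.w) ∘ Sum.inl) ⬝ᵥ ((M *ᵥ Sum.elim g₂.u g₂.w) ∘ Sum.inr)
    simp only [add_dotProduct, dotProduct_add]
    rw [dotProduct_comm ((M *ᵥ Sum.elim g₂.u g₂.w) ∘ Sum.inl)
      ((M *ᵥ Sum.elim g₁.u g₁.w) ∘ Sum.inr)]
    linear_combination (-(2 : ZMod p)⁻¹) * hs +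
      (((M *ᵥ Sum.elim g₁.u g₁.w) ∘ Sum.inl) ⬝ᵥ ((M *ᵥ Sum.elim g₂.u g₂.w) ∘ Sum.inr)
        - l * (g₁.u ⬝ᵥ g₂.w)) * h2' +
      (l * (2 : ZMod p)⁻¹) * dotProduct_comm g₁.w g₂.u

end AuxES1

theorem ES1_image_of_aut_in_GL (p n : ℕ) [Fact p.Prime] (hodd : Odd p) (hn : 0 < n) :
    {M : Matrix (Fin n ⊕ Fin n) (Fin n ⊕ Fin n) (ZMod p) |
        ∃ σ : ES1 p n ≃* ES1 p n,
          ∀ g : ES1 p n, Sum.elim (σ g).u (σ g).w = M *ᵥ Sum.elim g.u g.w}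
      = {M : Matrix (Fin n ⊕ Fin n) (Fin n ⊕ Fin n) (ZMod p) |
          IsUnit M ∧ ∃ l : ZMod p, l ≠ 0 ∧ Mᵀ * Delta p n * M = l • Delta p n} := by
  have hp2 : (2 : ZMod p) ≠ 0 := by
    intro h
    have hd : p ∣ 2 := (ZMod.natCast_eq_zero_iff 2 p).mp (by exact_mod_cast h)
    have hp2' := (Nat.prime_dvd_prime_iff_eq Fact.out Nat.prime_two).mp hd
    rw [hp2'] at hodd
    exact (Nat.not_odd_iff_even.mpr even_two) hodd
  ext M
  simp only [Set.mem_setOf_eq]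
  constructor
  · rintro ⟨σ, hσ⟩
    have hu : ∀ g : ES1 p n, (σ g).u = (M *ᵥ Sum.elim g.u g.w) ∘ Sum.inl := by
      intro g; funext i; exact congrFun (hσ g) (Sum.inl i)
    have hw : ∀ g : ES1 p n, (σ g).w = (M *ᵥ Sum.elim g.u g.w) ∘ Sum.inr := by
      intro g; funext i; exact congrFun (hσ g) (Sum.inr i)
    refine ⟨?_, ?_⟩
    · rw [← Matrix.mulVec_surjective_iff_isUnit]
      intro v
      refine ⟨Sum.elim (σ.symm ⟨v ∘ Sum.inl, v ∘ Sum.inr, 0⟩).u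
        (σ.symm ⟨v ∘ Sum.inl, v ∘ Sum.inr, 0⟩).w, ?_⟩
      rw [← hσ, MulEquiv.apply_symm_apply]
      exact Sum.elim_comp_inl_inr v
    · set c : ZMod p → ES1 p n := fun z => ⟨0, 0, z⟩ with hcdef
      have hc0 : ∀ z, Sum.elim (c z).u (c z).w = 0 := by
        intro z; funext x; cases x <;> rfl
      have hcu : ∀ z, (σ (c z)).u = 0 := by
        intro z; rw [hu, hc0 z, Matrix.mulVec_zero]; rfl
      have hcw : ∀ z, (σ (c z)).w = 0 := by
        intro z; rw [hw, hc0 z, Matrix.mulVec_zero]; rfl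
      have hmul_c : ∀ a b, c (a + b) = c a * c b := by
        intro a b
        refine ES1.ext ?_ ?_ ?_
        · show (0 : Fin n → ZMod p) = 0 + 0
          rw [add_zero]
        · show (0 : Fin n → ZMod p) = 0 + 0
          rw [add_zero]
        · show a + b = a + b + (0 : Fin n → ZMod p) ⬝ᵥ (0 : Fin n → ZMod p)
          rw [dotProduct_zero, add_zero]
      have hFadd : ∀ a b, (σ (c (a + b))).z = (σ (c a)).z + (σ (c b)).z := by
        intro a b
        rw [hmul_c, _root_.map_mul, ES1.mul_z, hcu a, zero_dotProduct, add_zero]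
      set l := (σ (c 1)).z with hldef
      have hFz : ∀ z : ZMod p, (σ (c z)).z = z * l := by
        intro z
        let F : ZMod p →+ ZMod p := AddMonoidHom.mk' (fun z => (σ (c z)).z) hFadd
        have h1 : (z.val : ℕ) • (1 : ZMod p) = z := by
          rw [nsmul_eq_mul, mul_one]; exact ZMod.natCast_rightInverse z
        have h2 : F z = z * l := by
          rw [← h1, map_nsmul]
          show (z.val : ℕ) • (σ (c 1)).z = ((z.val : ℕ) • (1 : ZMod p)) * l
          rw [nsmul_eq_mul, nsmul_eq_mul, mul_one, hldef]
        exact h2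
      have hl : l ≠ 0 := by
        intro h0
        have he : σ (c 1) = σ 1 := by
          rw [_root_.map_one]
          refine ES1.ext (hcu 1) (hcw 1) ?_
          show (σ (c 1)).z = 0
          rw [hFz 1, one_mul, h0]
        have h1 := congrArg ES1.z (σ.injective he)
        exact one_ne_zero h1
      refine ⟨l, hl, ?_⟩
      have key : ∀ g₁ g₂ : ES1 p n,
          (σ g₁).u ⬝ᵥ (σ g₂).w - (σ g₂).u ⬝ᵥ (σ g₁).w
            = (g₁.u ⬝ᵥ g₂.w - g₂.u ⬝ᵥ g₁.w) * l := by
        intro g₁ g₂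
        have e : g₁ * g₂ = (g₂ * g₁) * c (g₁.u ⬝ᵥ g₂.w - g₂.u ⬝ᵥ g₁.w) := by
          refine ES1.ext ?_ ?_ ?_
          · show g₁.u + g₂.u = g₂.u + g₁.u + 0
            rw [add_zero, add_comm]
          · show g₁.w + g₂.w = g₂.w + g₁.w + 0
            rw [add_zero, add_comm]
          · show g₁.z + g₂.z + g₁.u ⬝ᵥ g₂.w
              = g₂.z + g₁.z + g₂.u ⬝ᵥ g₁.w + (g₁.u ⬝ᵥ g₂.w - g₂.u ⬝ᵥ g₁.w)
                + (g₂.u + g₁.u) ⬝ᵥ (0 : Fin n → ZMod p)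
            rw [dotProduct_zero]; ring
        have hz := congrArg (fun g => (σ g).z) e
        simp only [_root_.map_mul, ES1.mul_z, ES1.mul_u] at hz
        rw [hFz, hcw, dotProduct_zero, add_zero] at hz
        linear_combination hz
      have key' : ∀ v₁ v₂ : Fin n ⊕ Fin n → ZMod p,
          v₁ ⬝ᵥ ((Mᵀ * Delta p n * M) *ᵥ v₂) = l * (v₁ ⬝ᵥ (Delta p n *ᵥ v₂)) := by
        intro v₁ v₂
        have k := key ⟨v₁ ∘ Sum.inl, v₁ ∘ Sum.inr, 0⟩ ⟨v₂ ∘ Sum.inl, v₂ ∘ Sum.inr, 0⟩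
        simp only [hu, hw, Sum.elim_comp_inl_inr] at k
        rw [← pairB, pairA, pairA]
        linear_combination k + dotProduct_comm ((M *ᵥ v₂) ∘ Sum.inl) ((M *ᵥ v₁) ∘ Sum.inr)
          - l * dotProduct_comm (v₂ ∘ Sum.inl) (v₁ ∘ Sum.inr)
      ext i j
      have hij := key' (Pi.single i 1) (Pi.single j 1)
      simp only [Matrix.mulVec_single_one, mul_one, single_dotProduct, one_mul] at hij
      rw [Matrix.smul_apply, smul_eq_mul]
      exact hij
  · rintro ⟨hU, l, hl, hM⟩
    have hdet : IsUnit M.det := (Matrix.isUnit_iff_isUnit_det M).mp hU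
    have hNM : ∀ x : Fin n ⊕ Fin n → ZMod p, M⁻¹ *ᵥ (M *ᵥ x) = x := by
      intro x; rw [Matrix.mulVec_mulVec, Matrix.nonsing_inv_mul M hdet, Matrix.one_mulVec]
    have hMN : ∀ x : Fin n ⊕ Fin n → ZMod p, M *ᵥ (M⁻¹ *ᵥ x) = x := by
      intro x; rw [Matrix.mulVec_mulVec, Matrix.mul_nonsing_inv M hdet, Matrix.one_mulVec]
    have hlinv : l⁻¹ * l = 1 := ZMod.inv_mul_of_unit l (isUnit_iff_ne_zero.mpr hl)
    have hl' : l⁻¹ ≠ 0 := by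
      intro h; rw [h, zero_mul] at hlinv; exact zero_ne_one hlinv
    have hinvinv : (l⁻¹)⁻¹ = l := ZMod.inv_eq_of_mul_eq_one p l⁻¹ l hlinv
    refine ⟨⟨⟨phi M l, phi M⁻¹ l⁻¹, phi_phi hNM hl hp2, fun g => ?_⟩,
      phi_mul hM hp2⟩, fun g => ?_⟩
    · have h := phi_phi (M := M⁻¹) (N := M) hMN hl' hp2 g
      rwa [hinvinv] at h
    · exact Sum.elim_comp_inl_inr (M *ᵥ Sum.elim g.u g.w)
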